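/- Let F be a finite field with q elements, and let K ≥ 3, 1 ≤ U ≤ K−1 and L, L_X, L_Y be natural numbers. For every two-round decentralized secure aggregation (DSA) scheme with input length L, first-round message length L_X and second-round message length L_Y that satisfies the correctness constraint (security is not needed), one has L_X ≥ L. Consequently the first-round rate satisfies R₁ = L_X/L ≥ 1 whenever L ≥ 1. -/

import Mathlib

open MeasureTheory Finset
open scoped ENNReal

/-- Two (discrete) random tuples `f` and `g` are statistically independent:
the joint law of `(f, g)` is the product of the marginal laws, expressed pointwise. -/
def IndepRV {Ω A B : Type*} [MeasurableSpace Ω] (P : Measure Ω)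
    (f : Ω → A) (g : Ω → B) : Prop :=
  ∀ (a : A) (b : B), P (f ⁻¹' {a} ∩ g ⁻¹' {b}) = P (f ⁻¹' {a}) * P (g ⁻¹' {b})

/-- A finite family of (discrete) random variables is mutually independent:
the joint law factorizes as the product of the marginals, expressed pointwise. -/
def iIndepRV {Ω ι : Type*} [Fintype ι] {A : ι → Type*} [MeasurableSpace Ω]
    (P : Measure Ω) (f : ∀ i, Ω → A i) : Prop :=
  ∀ a : ∀ i, A i, P (⋂ i, f i ⁻¹' {a i}) = ∏ i, P (f i ⁻¹' {a i})

/-- Conditional independence of two (discrete) random tuples `f` and `g` given the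
σ-algebra generated by a third (discrete) random tuple `h`, expressed pointwise:
`P(f = a, g = b | h = c) = P(f = a | h = c) * P(g = b | h = c)` for every `a`, `b`, `c`,
in a multiplied-out form that avoids division by zero. -/
def CondIndepRV {Ω A B C : Type*} [MeasurableSpace Ω] (P : Measure Ω)
    (f : Ω → A) (g : Ω → B) (h : Ω → C) : Prop :=
  ∀ (a : A) (b : B) (c : C),
    P (f ⁻¹' {a} ∩ g ⁻¹' {b} ∩ h ⁻¹' {c}) * P (h ⁻¹' {c}) =
      P (f ⁻¹' {a} ∩ h ⁻¹' {c}) * P (g ⁻¹' {b} ∩ h ⁻¹' {c})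

/-- A random variable valued in a finite type is uniformly distributed. -/
def UniformRV {Ω A : Type*} [Fintype A] [MeasurableSpace Ω] (P : Measure Ω)
    (f : Ω → A) : Prop :=
  ∀ a : A, P (f ⁻¹' {a}) = (Fintype.card A : ℝ≥0∞)⁻¹

/-- A two-round decentralized secure aggregation (DSA) scheme with `K` users,
minimum number `U` of surviving users, input length `L`, first-round message length
`LX`, and second-round message length `LY`, over the finite field `F`. -/
structure DSAScheme (F : Type) [Fintype F] (K U L LX LY : ℕ) where
  /-- The underlying probability space. -/
  Ω : Type
  /-- The σ-algebra on `Ω`. -/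
  [mΩ : MeasurableSpace Ω]
  /-- The probability measure. -/
  P : Measure Ω
  /-- `P` is a probability measure. -/
  [probP : IsProbabilityMeasure P]
  /-- The (finite) alphabet of the key random variables. -/
  Zt : Type
  /-- The key alphabet is finite. -/
  [fZt : Fintype Zt]
  /-- The input random variables `W₁, …, W_K`, valued in `F^L`. -/
  W : Fin K → Ω → (Fin L → F)
  /-- The key random variables `Z₁, …, Z_K`. -/
  Z : Fin K → Ω → Zt
  /-- The first-round (deterministic) encoders: `X_k = f_k (W_k, Z_k) ∈ F^{LX}`. -/
  f : Fin K → (Fin L → F) → Zt → (Fin LX → F)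
  /-- The second-round (deterministic) encoders, one for each surviving set `𝒰₁`:
  `Y_k^{𝒰₁} = g_{k,𝒰₁} (W_k, Z_k) ∈ F^{LY}`. -/
  g : Fin K → Finset (Fin K) → (Fin L → F) → Zt → (Fin LY → F)
  /-- Each `W_k` is a (measurable) random variable. -/
  measW : ∀ k (a : Fin L → F), MeasurableSet (W k ⁻¹' {a})
  /-- Each `Z_k` is a (measurable) random variable. -/
  measZ : ∀ k (z : Zt), MeasurableSet (Z k ⁻¹' {z})
  /-- The inputs `W₁, …, W_K` are mutually independent. -/
  indepW : iIndepRV P W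
  /-- Each input is uniformly distributed on `F^L`. -/
  unifW : ∀ k, UniformRV P (W k)
  /-- The tuple of inputs `(W₁, …, W_K)` is independent of the joint key tuple
  `(Z₁, …, Z_K)`. -/
  indepWZ : IndepRV P (fun ω (k : Fin K) => W k ω) (fun ω (k : Fin K) => Z k ω)

namespace DSAScheme

variable {F : Type} [Fintype F] [AddCommMonoid F] {K U L LX LY : ℕ}

/-- The first-round message of user `k`. -/
def X (𝓢 : DSAScheme F K U L LX LY) (k : Fin K) (ω : 𝓢.Ω) : Fin LX → F :=
  𝓢.f k (𝓢.W k ω) (𝓢.Z k ω)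

/-- The second-round message of user `k` when the first-round surviving set is `U1`. -/
def Y (𝓢 : DSAScheme F K U L LX LY) (U1 : Finset (Fin K)) (k : Fin K) (ω : 𝓢.Ω) :
    Fin LY → F :=
  𝓢.g k U1 (𝓢.W k ω) (𝓢.Z k ω)

/-- Correctness: for all surviving sets `𝒰₂ ⊆ 𝒰₁` with `|𝒰₂| ≥ U` and every user
`u ∈ 𝒰₂`, there is a deterministic decoder recovering `∑_{k ∈ 𝒰₁} W_k` almost surely
from `(X_k)_{k ∈ 𝒰₁ \ {u}}`, `(Y_k^{𝒰₁})_{k ∈ 𝒰₂ \ {u}}`, `W_u` and `Z_u`. -/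
def Correct (𝓢 : DSAScheme F K U L LX LY) : Prop :=
  ∀ U1 U2 : Finset (Fin K), U2 ⊆ U1 → U ≤ U2.card → ∀ u ∈ U2,
    ∃ d : ({k // k ∈ U1.erase u} → (Fin LX → F)) →
          ({k // k ∈ U2.erase u} → (Fin LY → F)) →
          (Fin L → F) → 𝓢.Zt → (Fin L → F),
      ∀ᵐ ω ∂𝓢.P,
        d (fun k => 𝓢.X k.1 ω) (fun k => 𝓢.Y U1 k.1 ω) (𝓢.W u ω) (𝓢.Z u ω)
          = ∑ k ∈ U1, 𝓢.W k ω

/-- Security against `T` colluding users: for every surviving set `𝒰₁` with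
`|𝒰₁| ≥ U`, every colluding set `𝒯` with `|𝒯| ≤ T` and every user `u`, the tuple
`((X_k)_{k ≠ u}, (Y_k^{𝒰₁})_{k ∈ 𝒰₁ \ {u}})` is conditionally independent of
`(W₁, …, W_K)` given `(∑_{k ∈ 𝒰₁} W_k, (W_k, Z_k)_{k ∈ 𝒯 ∪ {u}})`. -/
def Secure (𝓢 : DSAScheme F K U L LX LY) (T : ℕ) : Prop :=
  letI : MeasurableSpace 𝓢.Ω := 𝓢.mΩ
  ∀ U1 : Finset (Fin K), U ≤ U1.card →
  ∀ 𝒯 : Finset (Fin K), 𝒯.card ≤ T →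
  ∀ u : Fin K,
    CondIndepRV 𝓢.P
      (fun ω => ((fun k : {k : Fin K // k ≠ u} => 𝓢.X k.1 ω),
                 (fun k : {k // k ∈ U1.erase u} => 𝓢.Y U1 k.1 ω)))
      (fun ω (k : Fin K) => 𝓢.W k ω)
      (fun ω => (∑ k ∈ U1, 𝓢.W k ω,
                 fun k : {k // k ∈ insert u 𝒯} => (𝓢.W k.1 ω, 𝓢.Z k.1 ω)))

end DSAScheme

/-- **First-round converse for decentralized secure aggregation.**
For a finite field `F` with `q` elements, `K ≥ 3`, `1 ≤ U ≤ K - 1`, every two-round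
DSA scheme satisfying the correctness constraint has `L_X ≥ L`; consequently the
first-round rate satisfies `R₁ = L_X / L ≥ 1` whenever `L ≥ 1`. -/
theorem dsa_first_round_converse
    (F : Type) [Field F] [Fintype F] (q K U L LX LY : ℕ)
    (hq : Fintype.card F = q)
    (hK : 3 ≤ K) (hU1 : 1 ≤ U) (hUK : U ≤ K - 1)
    (𝓢 : DSAScheme F K U L LX LY)
    (hcorrect : 𝓢.Correct) :
    L ≤ LX ∧ (1 ≤ L → (1 : ℝ) ≤ (LX : ℝ) / (L : ℝ)) := by
  letI := 𝓢.mΩ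
  haveI := 𝓢.probP
  haveI := 𝓢.fZt
  have hmain : L ≤ LX := by
    set v : Fin K := ⟨0, by omega⟩ with hv
    set u : Fin K := ⟨1, by omega⟩ with hu
    have huv : u ≠ v := by simp [hu, hv, Fin.ext_iff]
    have hU2card : U ≤ (Finset.univ.erase v : Finset (Fin K)).card := by
      rw [Finset.card_erase_of_mem (Finset.mem_univ v), Finset.card_univ, Fintype.card_fin]
      omega
    obtain ⟨d, hd⟩ := hcorrect Finset.univ (Finset.univ.erase v)
      (Finset.subset_univ _) hU2card u (Finset.mem_erase.mpr ⟨huv, Finset.mem_univ u⟩)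
    -- find a key tuple with positive probability
    have hz : ∃ z : Fin K → 𝓢.Zt, 𝓢.P ((fun ω (k : Fin K) => 𝓢.Z k ω) ⁻¹' {z}) ≠ 0 := by
      by_contra h
      push_neg at h
      have hcover : (Set.univ : Set 𝓢.Ω) ⊆
          ⋃ z : Fin K → 𝓢.Zt, (fun ω (k : Fin K) => 𝓢.Z k ω) ⁻¹' {z} := by
        intro ω _
        exact Set.mem_iUnion.mpr ⟨fun k => 𝓢.Z k ω, rfl⟩
      have h0 : 𝓢.P (⋃ z : Fin K → 𝓢.Zt, (fun ω (k : Fin K) => 𝓢.Z k ω) ⁻¹' {z}) = 0 :=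
        measure_iUnion_null h
      have h1 : 𝓢.P Set.univ = 0 :=
        le_antisymm (h0 ▸ measure_mono hcover) zero_le
      simp [measure_univ] at h1
    obtain ⟨z, hzpos⟩ := hz
    classical
    -- the input tuple putting `a` at coordinate `v` and `0` elsewhere
    set wfun : (Fin L → F) → Fin K → (Fin L → F) := fun a k => if k = v then a else 0 with hwfun
    -- positive probability of each (w, z) atom
    have hWpre : ∀ w : Fin K → (Fin L → F),
        (fun ω (k : Fin K) => 𝓢.W k ω) ⁻¹' {w} = ⋂ k, 𝓢.W k ⁻¹' {w k} := by
      intro w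
      ext ω
      simp [Set.mem_iInter, funext_iff]
    have hWprob : ∀ w : Fin K → (Fin L → F),
        𝓢.P ((fun ω (k : Fin K) => 𝓢.W k ω) ⁻¹' {w}) ≠ 0 := by
      intro w
      rw [hWpre w, 𝓢.indepW w]
      rw [Finset.prod_ne_zero_iff]
      intro k _
      rw [𝓢.unifW k (w k)]
      exact ENNReal.inv_ne_zero.mpr (ENNReal.natCast_ne_top _)
    have hatom : ∀ a : Fin L → F,
        𝓢.P ((fun ω (k : Fin K) => 𝓢.W k ω) ⁻¹' {wfun a} ∩
             (fun ω (k : Fin K) => 𝓢.Z k ω) ⁻¹' {z}) ≠ 0 := by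
      intro a
      rw [𝓢.indepWZ (wfun a) z]
      exact mul_ne_zero (hWprob (wfun a)) hzpos
    -- the a.s. correctness event
    have hN : 𝓢.P {ω | ¬ (d (fun k => 𝓢.X k.1 ω) (fun k => 𝓢.Y Finset.univ k.1 ω)
        (𝓢.W u ω) (𝓢.Z u ω) = ∑ k ∈ Finset.univ, 𝓢.W k ω)} = 0 := by
      exact ae_iff.mp hd
    -- witness: a point where the inputs are exactly (wfun a, z) and the decoder works
    have hwit : ∀ a : Fin L → F, ∃ ω : 𝓢.Ω,
        (∀ k, 𝓢.W k ω = wfun a k) ∧ (∀ k, 𝓢.Z k ω = z k) ∧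
        d (fun k => 𝓢.X k.1 ω) (fun k => 𝓢.Y Finset.univ k.1 ω) (𝓢.W u ω) (𝓢.Z u ω)
          = ∑ k ∈ Finset.univ, 𝓢.W k ω := by
      intro a
      by_contra hcon
      push_neg at hcon
      apply hatom a
      apply le_antisymm _ zero_le
      rw [← hN]
      apply measure_mono
      intro ω hω
      obtain ⟨hW, hZ⟩ := hω
      have hW' : ∀ k, 𝓢.W k ω = wfun a k := fun k => congrFun hW k
      have hZ' : ∀ k, 𝓢.Z k ω = z k := fun k => congrFun hZ k
      exact hcon ω hW' hZ'
    -- the reconstruction map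
    set D : (Fin LX → F) → (Fin L → F) := fun x =>
      d (fun k => if k.1 = v then x else 𝓢.f k.1 0 (z k.1))
        (fun k => 𝓢.g k.1 Finset.univ 0 (z k.1)) 0 (z u) with hD
    have hDf : ∀ a : Fin L → F, D (𝓢.f v a (z v)) = a := by
      intro a
      obtain ⟨ω, hW, hZ, heq⟩ := hwit a
      have harg1 : (fun k : {k // k ∈ Finset.univ.erase u} =>
          if k.1 = v then 𝓢.f v a (z v) else 𝓢.f k.1 0 (z k.1))
          = fun k => 𝓢.X k.1 ω := by
        funext k
        by_cases hk : k.1 = v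
        · simp only [hk, if_pos rfl, DSAScheme.X]
          rw [hW v, hZ v, hwfun]
          simp
        · simp only [if_neg hk, DSAScheme.X]
          rw [hW k.1, hZ k.1, hwfun]
          simp [hk]
      have harg2 : (fun k : {k // k ∈ (Finset.univ.erase v).erase u} =>
          𝓢.g k.1 Finset.univ 0 (z k.1)) = fun k => 𝓢.Y Finset.univ k.1 ω := by
        funext k
        have hk : k.1 ≠ v := (Finset.mem_erase.mp (Finset.mem_of_mem_erase k.2)).1
        simp only [DSAScheme.Y]
        rw [hW k.1, hZ k.1, hwfun]
        simp [hk]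
      have hWu : 𝓢.W u ω = 0 := by rw [hW u, hwfun]; simp [huv]
      have hZu : 𝓢.Z u ω = z u := hZ u
      have hsum : ∑ k ∈ Finset.univ, 𝓢.W k ω = a := by
        have : ∀ k ∈ Finset.univ, 𝓢.W k ω = if k = v then a else 0 := by
          intro k _
          rw [hW k, hwfun]
        rw [Finset.sum_congr rfl this, Finset.sum_ite_eq' Finset.univ v (fun _ => a)]
        simp
      rw [hD]
      simp only
      rw [harg1, harg2, ← hWu, ← hZu, heq, hsum]
    have hinj : Function.Injective (fun a : Fin L → F => 𝓢.f v a (z v)) := by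
      intro a b hab
      simp only at hab
      rw [← hDf a, ← hDf b, hab]
    have hcard : Fintype.card (Fin L → F) ≤ Fintype.card (Fin LX → F) :=
      Fintype.card_le_of_injective _ hinj
    rw [Fintype.card_fun, Fintype.card_fun, Fintype.card_fin, Fintype.card_fin] at hcard
    have hq2 : 1 < Fintype.card F := Fintype.one_lt_card
    exact (Nat.pow_le_pow_iff_right hq2).mp hcard
  refine ⟨hmain, fun hL => ?_⟩
  have hLpos : (0 : ℝ) < (L : ℝ) := by exact_mod_cast hL
  rw [le_div_iff₀ hLpos, one_mul]
  exact_mod_cast hmain
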